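/- (Theorem 3.1(i), two decision makers.) Define the dynamic expected cost J(γ₁, γ₂) = ∫_Ω c(ω₀(ω), γ₁(y₁(ω)), γ₂(y₂^{γ₁}(ω))) dP(ω) over measurable policies γ₁ : Y₁ → U₁, γ₂ : Y₂ → U₂, and the policy-independent static-reduction cost J̃(γ₁, γ₂) = ∫_{(Ω₀×Y₁)×Y₂} c(ω₀, γ₁(y), γ₂(z)) · f(z, ω₀, γ₁(y), y) d(ν × Q). Then a policy pair (γ₁*, γ₂*) is person-by-person optimal for J (i.e., J(γ₁*, γ₂*) ≤ J(γ₁, γ₂*) for every measurable γ₁ and J(γ₁*, γ₂*) ≤ J(γ₁*, γ₂) for every measurable γ₂) if and only if it is person-by-person optimal for J̃; likewise, (γ₁*, γ₂*) is globally optimal for J (i.e., J(γ₁*, γ₂*) ≤ J(γ₁, γ₂) for all measurable policy pairs) if and only if it is globally optimal for J̃. -/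
import Mathlib


open MeasureTheory ProbabilityTheory
open scoped ENNReal NNReal

/-- **Theorem 3.1(i) (two decision makers): bijection of person-by-person optimal and
globally optimal policies under the policy-independent static reduction.**
`J` is the dynamic expected cost and `J̃` (here `Jt`) is the cost of the policy-independent
static reduction. Under the absolute-continuity hypothesis, a policy pair is
person-by-person optimal for `J` iff it is person-by-person optimal for `Jt`, and it is
globally optimal for `J` iff it is globally optimal for `Jt`. -/
theorem pbp_and_global_optimality_policy_independent_static_reduction
    {Ω Ω₀ Y₁ Y₂ U₁ U₂ : Type*}
    [MeasurableSpace Ω] [MeasurableSpace Ω₀] [MeasurableSpace Y₁]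
    [MeasurableSpace Y₂] [MeasurableSpace U₁] [MeasurableSpace U₂]
    (P : Measure Ω) [IsProbabilityMeasure P]
    (ω₀ : Ω → Ω₀) (y₁ : Ω → Y₁) (h : Ω × U₁ → Y₂)
    (hω₀ : Measurable ω₀) (hy₁ : Measurable y₁) (hh : Measurable h)
    (Q : Measure Y₂) [IsProbabilityMeasure Q]
    (f : Y₂ × Ω₀ × U₁ × Y₁ → ℝ≥0) (hf : Measurable f)
    (ν : Measure (Ω₀ × Y₁)) [SFinite ν]
    (hν : ν = P.map fun ω => (ω₀ ω, y₁ ω))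
    (habs : ∀ γ₁ : Y₁ → U₁, Measurable γ₁ →
      P.map (fun ω => ((ω₀ ω, y₁ ω), h (ω, γ₁ (y₁ ω))))
        = ν ⊗ₘ Kernel.withDensity (Kernel.const (Ω₀ × Y₁) Q)
            (fun p z => (f (z, p.1, γ₁ p.2, p.2) : ℝ≥0∞)))
    (c : Ω₀ × U₁ × U₂ → ℝ≥0∞) (hc : Measurable c)
    (J Jt : (Y₁ → U₁) → (Y₂ → U₂) → ℝ≥0∞)
    (hJ : ∀ γ₁ γ₂, J γ₁ γ₂
      = ∫⁻ ω, c (ω₀ ω, γ₁ (y₁ ω), γ₂ (h (ω, γ₁ (y₁ ω)))) ∂P)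
    (hJt : ∀ γ₁ γ₂, Jt γ₁ γ₂
      = ∫⁻ q, c (q.1.1, γ₁ q.1.2, γ₂ q.2)
          * (f (q.2, q.1.1, γ₁ q.1.2, q.1.2) : ℝ≥0∞) ∂(ν.prod Q))
    (γ₁s : Y₁ → U₁) (γ₂s : Y₂ → U₂)
    (hγ₁s : Measurable γ₁s) (hγ₂s : Measurable γ₂s) :
    (((∀ γ₁ : Y₁ → U₁, Measurable γ₁ → J γ₁s γ₂s ≤ J γ₁ γ₂s)
        ∧ (∀ γ₂ : Y₂ → U₂, Measurable γ₂ → J γ₁s γ₂s ≤ J γ₁s γ₂))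
      ↔ ((∀ γ₁ : Y₁ → U₁, Measurable γ₁ → Jt γ₁s γ₂s ≤ Jt γ₁ γ₂s)
        ∧ (∀ γ₂ : Y₂ → U₂, Measurable γ₂ → Jt γ₁s γ₂s ≤ Jt γ₁s γ₂)))
    ∧ ((∀ (γ₁ : Y₁ → U₁) (γ₂ : Y₂ → U₂), Measurable γ₁ → Measurable γ₂ →
          J γ₁s γ₂s ≤ J γ₁ γ₂)
      ↔ (∀ (γ₁ : Y₁ → U₁) (γ₂ : Y₂ → U₂), Measurable γ₁ → Measurable γ₂ →
          Jt γ₁s γ₂s ≤ Jt γ₁ γ₂)) := by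
  have key : ∀ (γ₁ : Y₁ → U₁) (γ₂ : Y₂ → U₂), Measurable γ₁ → Measurable γ₂ →
      J γ₁ γ₂ = Jt γ₁ γ₂ := by
    intro γ₁ γ₂ h₁ h₂
    rw [hJ, hJt]
    have hT : Measurable fun ω => ((ω₀ ω, y₁ ω), h (ω, γ₁ (y₁ ω))) :=
      (hω₀.prodMk hy₁).prodMk (hh.comp (measurable_id.prodMk (h₁.comp hy₁)))
    have hg : Measurable fun q : (Ω₀ × Y₁) × Y₂ => c (q.1.1, γ₁ q.1.2, γ₂ q.2) :=
      hc.comp ((measurable_fst.fst).prodMk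
        (((h₁.comp measurable_fst.snd)).prodMk (h₂.comp measurable_snd)))
    have hd : Measurable (Function.uncurry fun (p : Ω₀ × Y₁) z =>
        (f (z, p.1, γ₁ p.2, p.2) : ℝ≥0∞)) := by
      apply Measurable.coe_nnreal_ennreal
      exact hf.comp (measurable_snd.prodMk (measurable_fst.fst.prodMk
        ((h₁.comp measurable_fst.snd).prodMk measurable_fst.snd)))
    calc ∫⁻ ω, c (ω₀ ω, γ₁ (y₁ ω), γ₂ (h (ω, γ₁ (y₁ ω)))) ∂P
        = ∫⁻ q, c (q.1.1, γ₁ q.1.2, γ₂ q.2)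
            ∂(P.map fun ω => ((ω₀ ω, y₁ ω), h (ω, γ₁ (y₁ ω)))) :=
          (lintegral_map hg hT).symm
      _ = ∫⁻ q, c (q.1.1, γ₁ q.1.2, γ₂ q.2)
            ∂(ν ⊗ₘ Kernel.withDensity (Kernel.const (Ω₀ × Y₁) Q)
              (fun p z => (f (z, p.1, γ₁ p.2, p.2) : ℝ≥0∞))) := by rw [habs γ₁ h₁]
      _ = ∫⁻ p, ∫⁻ z, c (p.1, γ₁ p.2, γ₂ z)
            ∂((Kernel.withDensity (Kernel.const (Ω₀ × Y₁) Q)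
              (fun p z => (f (z, p.1, γ₁ p.2, p.2) : ℝ≥0∞))) p) ∂ν :=
          Measure.lintegral_compProd hg
      _ = ∫⁻ p, ∫⁻ z, c (p.1, γ₁ p.2, γ₂ z)
            * (f (z, p.1, γ₁ p.2, p.2) : ℝ≥0∞) ∂Q ∂ν := by
          refine lintegral_congr fun p => ?_
          have hdp : Measurable fun z : Y₂ => (f (z, p.1, γ₁ p.2, p.2) : ℝ≥0∞) :=
            hd.comp measurable_prodMk_left
          have hgp : Measurable fun z : Y₂ => c (p.1, γ₁ p.2, γ₂ z) :=
            hc.comp (measurable_const.prodMk (measurable_const.prodMk h₂))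
          rw [Kernel.withDensity_apply _ hd, Kernel.const_apply,
            lintegral_withDensity_eq_lintegral_mul Q hdp hgp]
          simp [Function.comp, mul_comm]
      _ = ∫⁻ q, c (q.1.1, γ₁ q.1.2, γ₂ q.2)
            * (f (q.2, q.1.1, γ₁ q.1.2, q.1.2) : ℝ≥0∞) ∂(ν.prod Q) :=
          (lintegral_prod _ (hg.mul hd).aemeasurable).symm
  constructor
  · constructor
    · rintro ⟨hA, hB⟩
      exact ⟨fun γ₁ m => by
          rw [← key _ _ hγ₁s hγ₂s, ← key _ _ m hγ₂s]; exact hA γ₁ m,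
        fun γ₂ m => by
          rw [← key _ _ hγ₁s hγ₂s, ← key _ _ hγ₁s m]; exact hB γ₂ m⟩
    · rintro ⟨hA, hB⟩
      exact ⟨fun γ₁ m => by
          rw [key _ _ hγ₁s hγ₂s, key _ _ m hγ₂s]; exact hA γ₁ m,
        fun γ₂ m => by
          rw [key _ _ hγ₁s hγ₂s, key _ _ hγ₁s m]; exact hB γ₂ m⟩
  · constructor
    · intro hA γ₁ γ₂ m₁ m₂
      rw [← key _ _ hγ₁s hγ₂s, ← key _ _ m₁ m₂]; exact hA γ₁ γ₂ m₁ m₂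
    · intro hA γ₁ γ₂ m₁ m₂
      rw [key _ _ hγ₁s hγ₂s, key _ _ m₁ m₂]; exact hA γ₁ γ₂ m₁ m₂
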